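/- Let U = ⟨H ∩ ((S∩H) ∪ S_O S_O⁻¹)⟩ where S_O = S \ H. The connected component of the identity in G(G,H,S) has vertex set U ∪ (⋃_{s ∈ S_O} U s). Every other connected component is either hΓ_e for some h ∈ H (a left translate of the identity component) or a single isolated vertex {x} with x ∈ G \ H. -/
import Mathlib


open scoped Pointwise Classical

def pairGraph {G : Type*} [Group G] (H : Subgroup G) (S : Set G) : SimpleGraph G :=
  SimpleGraph.fromRel (fun x y => ∃ h ∈ (H : Set G), ∃ s ∈ S, x = h ∧ y = h * s)

section Aux

variable {G : Type*} [Group G] {H : Subgroup G} {S : Set G}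

lemma pairGraph_adj {x y : G} :
    (pairGraph H S).Adj x y ↔ x ≠ y ∧
      ((x ∈ H ∧ ∃ s ∈ S, y = x * s) ∨ (y ∈ H ∧ ∃ s ∈ S, x = y * s)) := by
  simp only [pairGraph, SimpleGraph.fromRel_adj]
  constructor
  · rintro ⟨hne, ⟨h, hH, s, hs, rfl, rfl⟩ | ⟨h, hH, s, hs, rfl, rfl⟩⟩
    · exact ⟨hne, Or.inl ⟨hH, s, hs, rfl⟩⟩
    · exact ⟨hne, Or.inr ⟨hH, s, hs, rfl⟩⟩
  · rintro ⟨hne, ⟨hH, s, hs, rfl⟩ | ⟨hH, s, hs, rfl⟩⟩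
    · exact ⟨hne, Or.inl ⟨x, hH, s, hs, rfl, rfl⟩⟩
    · exact ⟨hne, Or.inr ⟨y, hH, s, hs, rfl, rfl⟩⟩

lemma pairGraph_adj_mul {a x y : G} (ha : a ∈ H)
    (h : (pairGraph H S).Adj x y) : (pairGraph H S).Adj (a * x) (a * y) := by
  rw [pairGraph_adj] at h ⊢
  obtain ⟨hne, h | h⟩ := h
  · obtain ⟨hH, s, hs, rfl⟩ := h
    exact ⟨by simpa using hne, Or.inl ⟨H.mul_mem ha hH, s, hs, (mul_assoc _ _ _).symm⟩⟩
  · obtain ⟨hH, s, hs, rfl⟩ := h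
    exact ⟨by simpa using hne, Or.inr ⟨H.mul_mem ha hH, s, hs, (mul_assoc _ _ _).symm⟩⟩

lemma pairGraph_reachable_mul {a x y : G} (ha : a ∈ H)
    (h : (pairGraph H S).Reachable x y) :
    (pairGraph H S).Reachable (a * x) (a * y) := by
  obtain ⟨w⟩ := h
  induction w with
  | nil => exact SimpleGraph.Reachable.refl _
  | cons hadj _ ih =>
      exact (SimpleGraph.Adj.reachable (pairGraph_adj_mul ha hadj)).trans ih

lemma pairGraph_reachable_closed {T : Set G}
    (hcl : ∀ x ∈ T, ∀ y, (pairGraph H S).Adj x y → y ∈ T)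
    {x y : G} (hx : x ∈ T) (h : (pairGraph H S).Reachable x y) : y ∈ T := by
  obtain ⟨w⟩ := h
  induction w with
  | nil => exact hx
  | cons hadj _ ih => exact ih (hcl _ hx _ hadj)

lemma pairGraph_comp_of_mem {h : G} (hH : h ∈ H) :
    {y : G | (pairGraph H S).Reachable h y} =
      (fun g => h * g) '' {y : G | (pairGraph H S).Reachable 1 y} := by
  ext y
  simp only [Set.mem_setOf_eq, Set.mem_image]
  constructor
  · intro hr
    refine ⟨h⁻¹ * y, ?_, by group⟩
    simpa using pairGraph_reachable_mul (H.inv_mem hH) hr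
  · rintro ⟨z, hz, rfl⟩
    simpa using pairGraph_reachable_mul hH hz

end Aux

set_option maxHeartbeats 2000000 in
/-- with `U = ⟨H ∩ ((S∩H) ∪ S_O S_O⁻¹)⟩`, the identity component
of the pair graph is `U ∪ ⋃_{s ∈ S_O} U s`; every other component is a left
translate `h Γ_e` with `h ∈ H`, or an isolated vertex `{x}`, `x ∈ G \ H`. -/
theorem pairGraph_components {G : Type*} [Group G] [Fintype G]
    (H : Subgroup G) (S : Set G)
    (hsym : (S ∩ (H : Set G))⁻¹ = S ∩ (H : Set G))
    (U : Subgroup G)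
    (hU : U = Subgroup.closure ((H : Set G) ∩
      ((S ∩ (H : Set G)) ∪ ((S \ (H : Set G)) * (S \ (H : Set G))⁻¹)))) :
    {x : G | (pairGraph H S).Reachable 1 x} =
        (U : Set G) ∪ ⋃ s ∈ S \ (H : Set G), (U : Set G) * {s} ∧
    ∀ x : G,
      (∃ h ∈ H, {y : G | (pairGraph H S).Reachable x y} =
          (fun g => h * g) '' {y : G | (pairGraph H S).Reachable 1 y}) ∨
      (x ∉ H ∧ {y : G | (pairGraph H S).Reachable x y} = {x}) := by
  -- U is contained in H
  have hUH : (U : Set G) ⊆ (H : Set G) := by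
    rw [hU]
    refine (Subgroup.closure_le H).mpr ?_
    exact Set.inter_subset_left
  -- every element of U is reachable from 1
  have hUreach : ∀ u : G, u ∈ U → (pairGraph H S).Reachable 1 u := by
    intro u hu
    rw [hU] at hu
    induction hu using Subgroup.closure_induction with
    | mem g hg =>
        obtain ⟨hgH, hg2⟩ := hg
        rcases hg2 with ⟨hgS, -⟩ | hg2
        · by_cases h1 : g = 1
          · subst h1; exact SimpleGraph.Reachable.refl _
          · refine SimpleGraph.Adj.reachable ?_
            rw [pairGraph_adj]
            exact ⟨fun h => h1 h.symm, Or.inl ⟨H.one_mem, g, hgS, (one_mul g).symm⟩⟩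
        · rw [Set.mem_mul] at hg2
          obtain ⟨s, hs, t', ht', hst⟩ := hg2
          rw [Set.mem_inv] at ht'
          have h1s : (pairGraph H S).Adj 1 s := by
            rw [pairGraph_adj]
            refine ⟨fun h => hs.2 (h ▸ H.one_mem), Or.inl ⟨H.one_mem, s, hs.1, (one_mul s).symm⟩⟩
          have hgs : (pairGraph H S).Adj g s := by
            rw [pairGraph_adj]
            exact ⟨fun h => hs.2 (h ▸ hgH), Or.inl ⟨hgH, t'⁻¹, ht'.1, by rw [← hst]; group⟩⟩
          exact h1s.reachable.trans hgs.reachable.symm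
    | one => exact SimpleGraph.Reachable.refl _
    | mul x y hx hy ihx ihy =>
        have hxH : x ∈ H := hUH (by rw [hU]; exact hx)
        have h2 : (pairGraph H S).Reachable x (x * y) := by
          simpa using pairGraph_reachable_mul hxH ihy
        exact ihx.trans h2
    | inv x hx ihx =>
        have hxH : x ∈ H := hUH (by rw [hU]; exact hx)
        have := pairGraph_reachable_mul (H.inv_mem hxH) ihx
        simpa using this.symm
  refine ⟨?_, ?_⟩
  · -- the identity component
    ext x
    simp only [Set.mem_setOf_eq]
    constructor
    · intro hr
      refine pairGraph_reachable_closed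
        (T := (U : Set G) ∪ ⋃ s ∈ S \ (H : Set G), (U : Set G) * {s}) ?_ ?_ hr
      · intro a ha y hadj
        rw [pairGraph_adj] at hadj
        obtain ⟨hne, hcase⟩ := hadj
        rcases ha with haU | haU
        · have haH : a ∈ H := hUH haU
          rcases hcase with ⟨-, s, hsS, rfl⟩ | ⟨hyH, s, hsS, hx⟩
          · by_cases hsH : s ∈ H
            · exact Or.inl (U.mul_mem haU
                (by rw [hU]; exact Subgroup.subset_closure ⟨hsH, Or.inl ⟨hsS, hsH⟩⟩))
            · refine Or.inr (Set.mem_biUnion (⟨hsS, hsH⟩ : s ∈ S \ (H : Set G)) ?_)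
              exact Set.mul_mem_mul haU rfl
          · have hsH : s ∈ H := by
              have h1 : s = y⁻¹ * a := by rw [hx]; group
              rw [h1]; exact H.mul_mem (H.inv_mem hyH) haH
            have hsinv : s⁻¹ ∈ S ∩ (H : Set G) := by
              rw [← hsym]; exact Set.inv_mem_inv.mpr ⟨hsS, hsH⟩
            have h2 : y = a * s⁻¹ := by rw [hx]; group
            rw [h2]
            exact Or.inl (U.mul_mem haU
              (by rw [hU]; exact Subgroup.subset_closure ⟨hsinv.2, Or.inl hsinv⟩))
        · simp only [Set.mem_iUnion, Set.mem_mul, Set.mem_singleton_iff,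
            exists_prop, exists_eq_left] at haU
          obtain ⟨t, ht, u, huU, hut⟩ := haU
          have haH : a ∉ H := by
            intro haH
            exact ht.2 (by
              have : t = u⁻¹ * a := by rw [← hut]; group
              rw [this]; exact H.mul_mem (H.inv_mem (hUH huU)) haH)
          rcases hcase with ⟨hxH, -⟩ | ⟨hyH, s, hsS, hx⟩
          · exact absurd hxH haH
          · have hsnH : s ∉ H := by
              intro hsH
              exact haH (by rw [hx]; exact H.mul_mem hyH hsH)
            have key : u * t = y * s := hut.trans hx
            have hy2 : y = u * (t * s⁻¹) := by
              rw [show u * (t * s⁻¹) = (u * t) * s⁻¹ from by group, key]; group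
            have hts : t * s⁻¹ ∈ (H : Set G) ∩
                ((S ∩ (H : Set G)) ∪ ((S \ (H : Set G)) * (S \ (H : Set G))⁻¹)) := by
              constructor
              · have h3 : t * s⁻¹ = u⁻¹ * y := by rw [hy2]; group
                rw [h3]
                exact H.mul_mem (H.inv_mem (hUH huU)) hyH
              · exact Or.inr (Set.mul_mem_mul ht (Set.inv_mem_inv.mpr ⟨hsS, hsnH⟩))
            rw [hy2]
            exact Or.inl (U.mul_mem huU (by rw [hU]; exact Subgroup.subset_closure hts))
      · exact Or.inl U.one_mem
    · intro hx
      rcases hx with hxU | hxU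
      · exact hUreach x hxU
      · simp only [Set.mem_iUnion, Set.mem_mul, Set.mem_singleton_iff,
          exists_prop, exists_eq_left] at hxU
        obtain ⟨t, ht, u, huU, hut⟩ := hxU
        have hadj : (pairGraph H S).Adj u (u * t) := by
          rw [pairGraph_adj]
          refine ⟨fun h => ht.2 ?_, Or.inl ⟨hUH huU, t, ht.1, rfl⟩⟩
          have ht1 : t = 1 := mul_left_cancel (h.symm.trans (mul_one u).symm)
          rw [ht1]; exact H.one_mem
        rw [← hut]
        exact (hUreach u huU).trans hadj.reachable
  · intro x
    by_cases hxH : x ∈ H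
    · exact Or.inl ⟨x, hxH, pairGraph_comp_of_mem hxH⟩
    · by_cases hnb : ∃ y, (pairGraph H S).Adj x y
      · obtain ⟨y, hadj⟩ := hnb
        have hyH : y ∈ H := by
          rw [pairGraph_adj] at hadj
          rcases hadj.2 with ⟨hx, -⟩ | ⟨hy, -⟩
          · exact absurd hx hxH
          · exact hy
        refine Or.inl ⟨y, hyH, ?_⟩
        have hset : {z : G | (pairGraph H S).Reachable x z}
            = {z : G | (pairGraph H S).Reachable y z} := by
          ext z
          exact ⟨fun h => (hadj.reachable.symm).trans h, fun h => hadj.reachable.trans h⟩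
        rw [hset]
        exact pairGraph_comp_of_mem hyH
      · push_neg at hnb
        refine Or.inr ⟨hxH, ?_⟩
        ext z
        simp only [Set.mem_setOf_eq, Set.mem_singleton_iff]
        constructor
        · intro h
          obtain ⟨w⟩ := h
          cases w with
          | nil => rfl
          | cons h p => exact absurd h (hnb _)
        · rintro rfl
          exact SimpleGraph.Reachable.refl _
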